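/- For every edge e = {u,v} of a finite connected simple graph G, the Earth Mover's Distance between the uniform closed-neighborhood distributions satisfies EMD_{dist_G}(P_u, P_v) ≤ 3·‖e‖_TVD; consequently C_G(e) ≥ 1 − 3·‖e‖_TVD. (This is the lower-bound half of the paper's inequality (eqb1); it holds because any point of Nbr_G(u) and any point of Nbr_G(v) are at graph distance at most 3.) -/
import Mathlib


/-- Earth Mover's Distance between two distributions `μ ν : V → ℝ` w.r.t. a
cost function `d : V → V → ℝ`: the minimum (infimum) of the total transport cost
over all feasible transport plans. -/
noncomputable def EMD {V : Type} (d : V → V → ℝ) (μ ν : V → ℝ) : ℝ :=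
  sInf { c : ℝ | ∃ z : V → V → ℝ,
    (∀ u v, 0 ≤ z u v) ∧ (∀ u, ∑ᶠ v, z u v = μ u) ∧ (∀ v, ∑ᶠ u, z u v = ν v) ∧
    c = ∑ᶠ u, ∑ᶠ v, d u v * z u v }

/-- The degree of a vertex: the number of its neighbours. -/
noncomputable def degC {V : Type} (G : SimpleGraph V) (u : V) : ℕ :=
  Nat.card {x | G.Adj u x}

open Classical in
/-- The uniform probability distribution on the closed neighbourhood of `u`. -/
noncomputable def Pdist {V : Type} (G : SimpleGraph V) (u : V) : V → ℝ :=
  fun w => if w = u ∨ G.Adj u w then ((degC G u : ℝ) + 1)⁻¹ else 0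

/-- The graph distance, as a real-valued cost function. -/
noncomputable def gdist {V : Type} (G : SimpleGraph V) : V → V → ℝ :=
  fun a b => (G.dist a b : ℝ)

/-- The total variation distance between the closed-neighbourhood distributions of `u`, `v`. -/
noncomputable def tvd {V : Type} (G : SimpleGraph V) (u v : V) : ℝ :=
  (1 / 2) * ∑ᶠ w, |Pdist G u w - Pdist G v w|

/-- The Ollivier–Ricci curvature of the (ordered) pair `u v`. -/
noncomputable def ricci {V : Type} (G : SimpleGraph V) (u v : V) : ℝ :=
  1 - EMD (gdist G) (Pdist G u) (Pdist G v)



open Classical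


lemma Pdist_nonneg {V : Type} (G : SimpleGraph V) (u w : V) : 0 ≤ Pdist G u w := by
  unfold Pdist
  split
  · positivity
  · exact le_refl 0

lemma Pdist_sum {V : Type} [Fintype V] (G : SimpleGraph V) (u : V) :
    ∑ w, Pdist G u w = 1 := by
  classical
  have hdisj : Disjoint (Finset.univ.filter (fun w => w = u))
      (Finset.univ.filter (fun w => G.Adj u w)) := by
    simp only [Finset.disjoint_filter, Finset.mem_filter]
    rintro a - rfl h
    exact G.irrefl h
  have h1 : (Finset.univ.filter (fun w => w = u)).card = 1 := by
    have : (Finset.univ.filter (fun w => w = u)) = {u} := by ext a; simp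
    rw [this, Finset.card_singleton]
  have h2 : (Finset.univ.filter (fun w => G.Adj u w)).card = degC G u := by
    simp [degC, Nat.card_eq_fintype_card, Fintype.card_subtype]
  have hcard : (Finset.univ.filter (fun w => w = u ∨ G.Adj u w)).card = degC G u + 1 := by
    rw [Finset.filter_or, Finset.card_union_of_disjoint hdisj, h1, h2]
    omega
  have : ∑ w, Pdist G u w =
      (Finset.univ.filter (fun w => w = u ∨ G.Adj u w)).card * ((degC G u : ℝ) + 1)⁻¹ := by
    unfold Pdist
    rw [Finset.sum_ite, Finset.sum_const, Finset.sum_const]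
    simp
  rw [this, hcard]
  have : ((degC G u : ℝ) + 1) ≠ 0 := by positivity
  push_cast
  field_simp

lemma EMD_le_bound {V : Type} [Fintype V] (d : V → V → ℝ) (μ ν : V → ℝ) (K : ℝ)
    (hd0 : ∀ a b, 0 ≤ d a b) (hdd : ∀ a, d a a = 0) (hK : 0 ≤ K)
    (hdK : ∀ a b, μ a ≠ 0 → ν b ≠ 0 → d a b ≤ K)
    (hμ : ∀ a, 0 ≤ μ a) (hν : ∀ b, 0 ≤ ν b)
    (hsum : ∑ a, μ a = ∑ b, ν b) :
    EMD d μ ν ≤ K * ((1/2) * ∑ w, |μ w - ν w|) := by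
  classical
  set m : V → ℝ := fun w => min (μ w) (ν w) with hm
  set f : V → ℝ := fun w => μ w - m w with hf
  set g : V → ℝ := fun w => ν w - m w with hg
  set T : ℝ := ∑ w, f w with hT
  have hm0 : ∀ w, 0 ≤ m w := fun w => le_min (hμ w) (hν w)
  have hf0 : ∀ w, 0 ≤ f w := fun w => by
    simp only [hf, hm, sub_nonneg]; exact min_le_left _ _
  have hg0 : ∀ w, 0 ≤ g w := fun w => by
    simp only [hg, hm, sub_nonneg]; exact min_le_right _ _
  have hT0 : 0 ≤ T := Finset.sum_nonneg fun w _ => hf0 w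
  have hTg : ∑ w, g w = T := by
    simp only [hg, hf, hT, Finset.sum_sub_distrib]
    rw [hsum]
  have habs : ∀ w, |μ w - ν w| = f w + g w := by
    intro w
    rcases le_total (μ w) (ν w) with h | h
    · rw [abs_sub_comm, abs_of_nonneg (by linarith)]
      simp only [hf, hg, hm, min_eq_left h]
      ring
    · rw [abs_of_nonneg (by linarith)]
      simp only [hf, hg, hm, min_eq_right h]
      ring
  have hsumabs : ∑ w, |μ w - ν w| = 2 * T := by
    simp only [habs]
    rw [Finset.sum_add_distrib, hTg, hT]
    ring
  set z : V → V → ℝ := fun a b => (if b = a then m a else 0) + f a * g b / T with hz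
  have hz0 : ∀ a b, 0 ≤ z a b := by
    intro a b
    apply add_nonneg
    · split <;> simp [hm0]
    · exact div_nonneg (mul_nonneg (hf0 a) (hg0 b)) hT0
  have hμm : ∀ a, μ a = m a + f a := by intro a; simp [hf]
  have hνm : ∀ b, ν b = m b + g b := by intro b; simp [hg]
  have hfT : T = 0 → ∀ a, f a = 0 := by
    intro h a
    exact (Finset.sum_eq_zero_iff_of_nonneg (fun w _ => hf0 w)).1 (by rw [← hT]; exact h) a
      (Finset.mem_univ a)
  have hrow : ∀ a, ∑ᶠ b, z a b = μ a := by
    intro a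
    rw [finsum_eq_sum_of_fintype]
    have : ∑ b, z a b = m a + f a * T / T := by
      simp only [hz]
      rw [Finset.sum_add_distrib]
      congr 1
      · simp
      · rw [← Finset.sum_div, ← Finset.mul_sum, hTg]
    rw [this, hμm a]
    by_cases hT' : T = 0
    · rw [hfT hT' a]; simp
    · rw [mul_div_assoc, div_self hT', mul_one]
  have hcol : ∀ b, ∑ᶠ a, z a b = ν b := by
    intro b
    rw [finsum_eq_sum_of_fintype]
    have : ∑ a, z a b = m b + T * g b / T := by
      simp only [hz]
      rw [Finset.sum_add_distrib]
      congr 1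
      · simp
      · rw [← Finset.sum_div, ← Finset.sum_mul, hT]
    rw [this, hνm b]
    by_cases hT' : T = 0
    · have hg' : g b = 0 := by
        have := (Finset.sum_eq_zero_iff_of_nonneg (fun w _ => hg0 w)).1
          (by rw [hTg]; exact hT') b (Finset.mem_univ b)
        exact this
      rw [hg']; simp
    · rw [mul_comm, mul_div_assoc, div_self hT', mul_one]
  have hcost : (∑ᶠ a, ∑ᶠ b, d a b * z a b) ≤ K * T := by
    rw [finsum_eq_sum_of_fintype]
    have hrw : ∀ a, ∑ᶠ b, d a b * z a b = ∑ b, d a b * (f a * g b / T) := by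
      intro a
      rw [finsum_eq_sum_of_fintype]
      apply Finset.sum_congr rfl
      intro b _
      simp only [hz]
      rcases eq_or_ne b a with rfl | hne
      · simp [hdd]
      · simp [hne]
    simp only [hrw]
    have hterm : ∀ a b, d a b * (f a * g b / T) ≤ K * (f a * g b / T) := by
      intro a b
      rcases eq_or_ne (f a) 0 with h | h
      · simp [h]
      rcases eq_or_ne (g b) 0 with h' | h'
      · simp [h']
      have hμa : μ a ≠ 0 := by
        have : 0 < f a := lt_of_le_of_ne (hf0 a) (Ne.symm h)
        have := hμm a
        nlinarith [hm0 a]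
      have hνb : ν b ≠ 0 := by
        have : 0 < g b := lt_of_le_of_ne (hg0 b) (Ne.symm h')
        have := hνm b
        nlinarith [hm0 b]
      exact mul_le_mul_of_nonneg_right (hdK a b hμa hνb)
        (div_nonneg (mul_nonneg (hf0 a) (hg0 b)) hT0)
    calc ∑ a, ∑ b, d a b * (f a * g b / T)
        ≤ ∑ a, ∑ b, K * (f a * g b / T) :=
          Finset.sum_le_sum fun a _ => Finset.sum_le_sum fun b _ => hterm a b
      _ = K * (T * T / T) := by
          have h1 : ∀ a, ∑ b, K * (f a * g b / T) = K * (f a * T / T) := by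
            intro a
            rw [← Finset.mul_sum]
            congr 1
            rw [← Finset.sum_div, ← Finset.mul_sum, hTg]
          simp only [h1]
          rw [← Finset.mul_sum]
          congr 1
          rw [← Finset.sum_div, ← Finset.sum_mul]
      _ ≤ K * T := by
          by_cases hT' : T = 0
          · simp [hT']
          · rw [mul_div_assoc, div_self hT', mul_one]
  have hbdd : BddBelow { c : ℝ | ∃ z : V → V → ℝ,
      (∀ u v, 0 ≤ z u v) ∧ (∀ u, ∑ᶠ v, z u v = μ u) ∧ (∀ v, ∑ᶠ u, z u v = ν v) ∧
      c = ∑ᶠ u, ∑ᶠ v, d u v * z u v } := by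
    refine ⟨0, ?_⟩
    rintro c ⟨z', hz0', -, -, rfl⟩
    rw [finsum_eq_sum_of_fintype]
    apply Finset.sum_nonneg
    intro a _
    rw [finsum_eq_sum_of_fintype]
    exact Finset.sum_nonneg fun b _ => mul_nonneg (hd0 a b) (hz0' a b)
  have hmem : (∑ᶠ a, ∑ᶠ b, d a b * z a b) ∈ { c : ℝ | ∃ z : V → V → ℝ,
      (∀ u v, 0 ≤ z u v) ∧ (∀ u, ∑ᶠ v, z u v = μ u) ∧ (∀ v, ∑ᶠ u, z u v = ν v) ∧
      c = ∑ᶠ u, ∑ᶠ v, d u v * z u v } := ⟨z, hz0, hrow, hcol, rfl⟩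
  calc EMD d μ ν ≤ ∑ᶠ a, ∑ᶠ b, d a b * z a b := csInf_le hbdd hmem
    _ ≤ K * T := hcost
    _ = K * ((1/2) * ∑ w, |μ w - ν w|) := by rw [hsumabs]; ring

/-- For every edge `e = {u,v}` of a finite connected simple graph `G`,
the Earth Mover's Distance between the uniform closed-neighborhood distributions
satisfies `EMD_{dist_G}(P_u, P_v) ≤ 3·‖e‖_TVD`; consequently
`C_G(e) ≥ 1 − 3·‖e‖_TVD`. -/
theorem emd_le_three_tvd {V : Type} [Finite V] (G : SimpleGraph V) (hG : G.Connected)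
    (u v : V) (huv : G.Adj u v) :
    EMD (gdist G) (Pdist G u) (Pdist G v) ≤ 3 * tvd G u v ∧
    1 - 3 * tvd G u v ≤ ricci G u v := by
    classical
  haveI : Fintype V := Fintype.ofFinite V
  have hdist3 : ∀ a b, Pdist G u a ≠ 0 → Pdist G v b ≠ 0 → gdist G a b ≤ 3 := by
    intro a b ha hb
    have hau : G.dist a u ≤ 1 := by
      by_contra h
      apply ha
      unfold Pdist
      rw [if_neg]
      rintro (rfl | hadj)
      · exact h (by simp [SimpleGraph.dist_self])
      · exact h (le_of_eq (SimpleGraph.dist_eq_one_iff_adj.2 hadj.symm))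
    have hvb : G.dist v b ≤ 1 := by
      by_contra h
      apply hb
      unfold Pdist
      rw [if_neg]
      rintro (rfl | hadj)
      · exact h (by simp [SimpleGraph.dist_self])
      · exact h (le_of_eq (SimpleGraph.dist_eq_one_iff_adj.2 hadj))
    have huv1 : G.dist u v = 1 := SimpleGraph.dist_eq_one_iff_adj.2 huv
    have h1 : G.dist a b ≤ G.dist a u + G.dist u b := hG.dist_triangle
    have h2 : G.dist u b ≤ G.dist u v + G.dist v b := hG.dist_triangle
    have : G.dist a b ≤ 3 := by omega
    unfold gdist
    exact_mod_cast this
  have hmain : EMD (gdist G) (Pdist G u) (Pdist G v) ≤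
      3 * ((1/2) * ∑ w, |Pdist G u w - Pdist G v w|) := by
    apply EMD_le_bound
    · intro a b; unfold gdist; positivity
    · intro a; unfold gdist; simp [SimpleGraph.dist_self]
    · norm_num
    · exact hdist3
    · exact fun a => Pdist_nonneg G u a
    · exact fun b => Pdist_nonneg G v b
    · rw [Pdist_sum, Pdist_sum]
  have htvd : tvd G u v = (1/2) * ∑ w, |Pdist G u w - Pdist G v w| := by
    unfold tvd
    rw [finsum_eq_sum_of_fintype]
  rw [htvd] at *
  refine ⟨hmain, ?_⟩
  unfold ricci
  linarith
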